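/- arXiv:0711.3032 — 4 statements merged into one kernel-verified Lean document; each statement's English description precedes it below -/
import Mathlib

section
/- Let H be a real Hilbert space, B a bounded symmetric bilinear form on H represented by a self-adjoint Fredholm operator T, and Z ⊆ H a subspace on which B vanishes identically (B-isotropic) such that Z ∩ Ker(B) = {0}. Then the Morse index of B (the dimension of a maximal subspace on which B is negative definite) is at least dim(Z). -/
open scoped RealInnerProductSpace

/-- The Morse index of a bounded symmetric bilinear form `B`: the supremum of the
dimensions of subspaces on which `B` is negative definite. -/
noncomputable def morseIndex {H : Type*} [NormedAddCommGroup H] [InnerProductSpace ℝ H]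
    (B : H →L[ℝ] H →L[ℝ] ℝ) : Cardinal :=
  ⨆ W : {W : Submodule ℝ H // ∀ x ∈ W, x ≠ 0 → B x x < 0}, Module.rank ℝ W.1

/-- if `B` is a bounded symmetric bilinear form represented by a self-adjoint
Fredholm operator `T`, and `Z` is a `B`-isotropic subspace with `Z ∩ Ker B = {0}`, then
`n₋(B) ≥ dim Z`. -/
theorem stmt0 {H : Type*} [NormedAddCommGroup H] [InnerProductSpace ℝ H] [CompleteSpace H]
    (B : H →L[ℝ] H →L[ℝ] ℝ) (T : H →L[ℝ] H)
    (hrep : ∀ x y, B x y = ⟪T x, y⟫)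
    (hsa : ∀ x y, ⟪T x, y⟫ = ⟪x, T y⟫)
    (hker : FiniteDimensional ℝ (LinearMap.ker (T : H →ₗ[ℝ] H)))
    (hclosed : IsClosed (LinearMap.range (T : H →ₗ[ℝ] H) : Set H))
    (hcoker : FiniteDimensional ℝ (H ⧸ LinearMap.range (T : H →ₗ[ℝ] H)))
    (Z : Submodule ℝ H)
    (hiso : ∀ x ∈ Z, ∀ y ∈ Z, B x y = 0)
    (hZker : ∀ x ∈ Z, (∀ y, B x y = 0) → x = 0) :
    Module.rank ℝ Z ≤ morseIndex B := by
  classical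
  set t : ℝ := (1 + ‖T‖)⁻¹ with ht
  have hTnorm : (0:ℝ) ≤ ‖T‖ := norm_nonneg _
  have htpos : 0 < t := inv_pos.2 (by positivity)
  have htT : t * (1 + ‖T‖) = 1 := inv_mul_cancel₀ (by positivity)
  -- nonzero elements of Z are not in ker T
  have hTz : ∀ z ∈ Z, z ≠ 0 → T z ≠ 0 := by
    intro z hz hz0 hTz0
    exact hz0 (hZker z hz (fun y => by rw [hrep, hTz0, inner_zero_left]))
  -- the linear map z ↦ z - t • T z on Z
  let g : ↥Z →ₗ[ℝ] H := Z.subtype - t • ((T : H →ₗ[ℝ] H) ∘ₗ Z.subtype)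
  have hg : ∀ z : ↥Z, g z = (z : H) - t • T (z : H) := fun z => rfl
  -- key negativity computation
  have key : ∀ z ∈ Z, z ≠ 0 → B (z - t • T z) (z - t • T z) < 0 := by
    intro z hz hz0
    have hTz0 : T z ≠ 0 := hTz z hz hz0
    have ha : (0:ℝ) < ‖T z‖ ^ 2 := pow_pos (norm_pos_iff.2 hTz0) 2
    have h1 : B z z = 0 := hiso z hz z hz
    have h2 : B z (T z) = ‖T z‖ ^ 2 := by
      rw [hrep, real_inner_self_eq_norm_sq]
    have h3 : B (T z) z = ‖T z‖ ^ 2 := by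
      rw [hrep, hsa, real_inner_comm, real_inner_self_eq_norm_sq]
    have h4 : B (T z) (T z) ≤ ‖T‖ * ‖T z‖ ^ 2 := by
      rw [hrep]
      calc ⟪T (T z), T z⟫ ≤ ‖T (T z)‖ * ‖T z‖ :=
            real_inner_le_norm _ _
        _ ≤ (‖T‖ * ‖T z‖) * ‖T z‖ :=
            mul_le_mul_of_nonneg_right (T.le_opNorm _) (norm_nonneg _)
        _ = ‖T‖ * ‖T z‖ ^ 2 := by ring
    have hexp : B (z - t • T z) (z - t • T z)
        = B z z - t * B (T z) z - t * B z (T z) + t * (t * B (T z) (T z)) := by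
      simp [map_sub, map_smul, smul_eq_mul]
      ring
    rw [hexp, h1, h2, h3]
    nlinarith [mul_pos htpos ha, mul_pos (mul_pos htpos htpos) ha,
      mul_le_mul_of_nonneg_left h4 (le_of_lt (mul_pos htpos htpos))]
  -- g is injective
  have hginj : Function.Injective g := by
    rw [← LinearMap.ker_eq_bot]
    rw [LinearMap.ker_eq_bot']
    intro z hz0
    by_contra hne
    have := key (z : H) z.2 (by simpa using hne)
    rw [← hg, hz0] at this
    simp at this
  -- the image subspace
  let W : Submodule ℝ H := LinearMap.range g
  have hW : ∀ x ∈ W, x ≠ 0 → B x x < 0 := by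
    rintro x ⟨z, rfl⟩ hx0
    have hz0 : (z : ↥Z) ≠ 0 := by
      rintro rfl; simp [hg] at hx0
    rw [hg]
    exact key (z : H) z.2 (fun h => hz0 (Subtype.coe_injective h))
  have hrank : Module.rank ℝ Z = Module.rank ℝ W :=
    (LinearEquiv.ofInjective g hginj).rank_eq
  rw [hrank]
  have hbdd : BddAbove (Set.range fun W : {W : Submodule ℝ H // ∀ x ∈ W, x ≠ 0 → B x x < 0} =>
      Module.rank ℝ W.1) := by
    refine ⟨Module.rank ℝ H, ?_⟩
    rintro c ⟨W', rfl⟩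
    exact Submodule.rank_le _
  exact le_ciSup hbdd (⟨W, hW⟩ : {W : Submodule ℝ H // ∀ x ∈ W, x ≠ 0 → B x x < 0})
end

section
/- Let H be a real Hilbert space and B a bounded symmetric bilinear form on H. Then B is essentially positive if and only if there exists a closed subspace V ⊆ H of finite codimension such that inf{B(x,x) : x ∈ V, ‖x‖ = 1} > 0. -/
open scoped RealInnerProductSpace

/-- A continuous linear map with range in a finite-dimensional submodule is compact. -/
lemma auxFinRankCompact {H : Type*} [NormedAddCommGroup H] [InnerProductSpace ℝ H]
    (f : H →L[ℝ] H) (W : Submodule ℝ H) [FiniteDimensional ℝ W]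
    (hrange : ∀ x, f x ∈ W) : IsCompactOperator f := by
  have : IsCompactOperator (f : H →ₗ[ℝ] H) := by
    rw [isCompactOperator_iff_image_closedBall_subset_compact (f := (f : H →ₗ[ℝ] H))
      (r := 1) one_pos]
    refine ⟨Subtype.val '' Metric.closedBall (0 : W) ‖f‖, ?_, ?_⟩
    · exact (ProperSpace.isCompact_closedBall _ _).image continuous_subtype_val
    · rintro y ⟨x, hx, rfl⟩
      refine ⟨⟨f x, hrange x⟩, ?_, rfl⟩
      rw [Metric.mem_closedBall, dist_zero_right]
      calc ‖(⟨f x, hrange x⟩ : W)‖ = ‖f x‖ := rfl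
        _ ≤ ‖f‖ * ‖x‖ := f.le_opNorm x
        _ ≤ ‖f‖ * 1 := by
            have := Metric.mem_closedBall.mp hx
            rw [dist_zero_right] at this
            exact mul_le_mul_of_nonneg_left this (norm_nonneg f)
        _ = ‖f‖ := mul_one _
  exact this

/-- A coercive continuous linear map on a Hilbert space is bijective (Lax–Milgram). -/
lemma auxCoerciveBijective {H : Type*} [NormedAddCommGroup H] [InnerProductSpace ℝ H]
    [CompleteSpace H] (P : H →L[ℝ] H) {c : ℝ} (hc : 0 < c)
    (hcoer : ∀ x, c * ‖x‖ * ‖x‖ ≤ ⟪P x, x⟫) : Function.Bijective P := by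
  set BP : H →L[ℝ] H →L[ℝ] ℝ := (innerSL ℝ).comp P with hBP
  have hBPapp : ∀ x y, BP x y = ⟪P x, y⟫ := fun x y => rfl
  have hco : IsCoercive BP := ⟨c, hc, fun u => by rw [hBPapp]; exact hcoer u⟩
  have hPe : ∀ x, P x = hco.continuousLinearEquivOfBilin x := fun x =>
    ext_inner_right ℝ fun w => by
      rw [hco.continuousLinearEquivOfBilin_apply, hBPapp]
  rw [show (P : H → H) = hco.continuousLinearEquivOfBilin from funext hPe]
  exact hco.continuousLinearEquivOfBilin.bijective

/-- A positive self-adjoint isomorphism of a Hilbert space is coercive. -/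
lemma auxPosCoercive {H : Type*} [NormedAddCommGroup H] [InnerProductSpace ℝ H]
    [CompleteSpace H] (P : H →L[ℝ] H)
    (hsa : ∀ x y, ⟪P x, y⟫ = ⟪x, P y⟫) (hbij : Function.Bijective P)
    (hpos : ∀ x, x ≠ 0 → 0 < ⟪P x, x⟫) :
    ∃ c : ℝ, 0 < c ∧ ∀ x, c * ‖x‖ * ‖x‖ ≤ ⟪P x, x⟫ := by
  set e := ContinuousLinearEquiv.ofBijective P
    (LinearMap.ker_eq_bot.mpr hbij.1) (LinearMap.range_eq_top.mpr hbij.2) with he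
  set M := ‖(e.symm : H →L[ℝ] H)‖ with hM
  have hM0 : 0 ≤ M := norm_nonneg _
  have hlow : ∀ x, ‖x‖ ≤ (M + 1) * ‖P x‖ := by
    intro x
    have h1 : e.symm (P x) = x := by
      have : e x = P x := rfl
      rw [← this, e.symm_apply_apply]
    calc ‖x‖ = ‖e.symm (P x)‖ := by rw [h1]
      _ ≤ M * ‖P x‖ := (e.symm : H →L[ℝ] H).le_opNorm (P x)
      _ ≤ (M + 1) * ‖P x‖ := by
          have := norm_nonneg (P x); nlinarith
  have hq : ∀ x, 0 ≤ ⟪P x, x⟫ := by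
    intro x
    rcases eq_or_ne x 0 with rfl | hx
    · simp
    · exact (hpos x hx).le
  have hCS : ∀ a b : H, ⟪P a, b⟫ ^ 2 ≤ ⟪P a, a⟫ * ⟪P b, b⟫ := by
    intro a b
    have hquad : ∀ t : ℝ, 0 ≤ ⟪P b, b⟫ * (t * t) + (2 * ⟪P a, b⟫) * t + ⟪P a, a⟫ := by
      intro t
      have h0 : 0 ≤ ⟪P (a + t • b), a + t • b⟫ := hq _
      have hsym : ⟪P b, a⟫ = ⟪P a, b⟫ := by
        rw [hsa b a, real_inner_comm]
      simp only [map_add, map_smul, inner_add_left, inner_add_right, inner_smul_left,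
        inner_smul_right, starRingEnd_apply, star_trivial] at h0 ⊢
      rw [hsym] at h0
      nlinarith [h0]
    have := discrim_le_zero hquad
    rw [discrim] at this
    nlinarith [this]
  refine ⟨1 / ((M + 1) ^ 2 * (‖P‖ + 1)), by positivity, fun x => ?_⟩
  have hP0 : 0 ≤ ‖P‖ := norm_nonneg _
  rcases (norm_nonneg (P x)).eq_or_lt with hPx | hPx
  · have hx : ‖x‖ = 0 := le_antisymm (by
      have := hlow x; rw [← hPx] at this; simpa using this) (norm_nonneg x)
    rw [hx]
    simpa using hq x
  · have h2 : ‖P x‖ ^ 2 * ‖P x‖ ^ 2 ≤ ⟪P x, x⟫ * ((‖P‖ + 1) * ‖P x‖ ^ 2) := by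
      have hcs := hCS x (P x)
      have ha : ⟪P x, P x⟫ = ‖P x‖ ^ 2 := real_inner_self_eq_norm_sq (P x)
      have hb : ⟪P (P x), P x⟫ ≤ (‖P‖ + 1) * ‖P x‖ ^ 2 := by
        calc ⟪P (P x), P x⟫ ≤ ‖P (P x)‖ * ‖P x‖ := real_inner_le_norm _ _
          _ ≤ (‖P‖ * ‖P x‖) * ‖P x‖ :=
              mul_le_mul_of_nonneg_right (P.le_opNorm (P x)) (norm_nonneg _)
          _ ≤ (‖P‖ + 1) * ‖P x‖ ^ 2 := by nlinarith [norm_nonneg (P x)]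
      nlinarith [hq x]
    have h3 : ‖P x‖ ^ 2 ≤ ⟪P x, x⟫ * (‖P‖ + 1) := by
      have hp2 : 0 < ‖P x‖ ^ 2 := by positivity
      nlinarith [h2]
    have h4 : ‖x‖ ^ 2 ≤ (M + 1) ^ 2 * ‖P x‖ ^ 2 := by
      have := hlow x
      nlinarith [norm_nonneg x, norm_nonneg (P x)]
    rw [div_mul_eq_mul_div, div_mul_eq_mul_div, div_le_iff₀ (by positivity)]
    nlinarith [hq x, h3, h4]

/-- Essentially positive bilinear form: represented by a positive self-adjoint
isomorphism plus a compact self-adjoint operator. -/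
def IsEssPos {E : Type*} [NormedAddCommGroup E] [InnerProductSpace ℝ E]
    (B : E → E → ℝ) : Prop :=
  ∃ P K : E →L[ℝ] E,
    (∀ x y, ⟪P x, y⟫ = ⟪x, P y⟫) ∧ Function.Bijective P ∧
    (∀ x, x ≠ 0 → 0 < ⟪P x, x⟫) ∧
    (∀ x y, ⟪K x, y⟫ = ⟪x, K y⟫) ∧ IsCompactOperator K ∧
    (∀ x y, B x y = ⟪(P + K) x, y⟫)

/-- `B` is essentially positive iff there is a closed finite-codimensional
subspace `V` with `inf { B(x,x) : x ∈ V, ‖x‖ = 1 } > 0`. -/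
theorem stmt4 {H : Type*} [NormedAddCommGroup H] [InnerProductSpace ℝ H] [CompleteSpace H]
    (B : H →L[ℝ] H →L[ℝ] ℝ) (hsym : ∀ x y, B x y = B y x) :
    IsEssPos (fun x y => B x y) ↔
      ∃ V : Submodule ℝ H, IsClosed (V : Set H) ∧ FiniteDimensional ℝ (H ⧸ V) ∧
        ∃ c : ℝ, 0 < c ∧ ∀ x ∈ V, ‖x‖ = 1 → c ≤ B x x := by
  constructor
  · -- Forward direction
    rintro ⟨P, K, hPsa, hPbij, hPpos, hKsa, hKcpt, hrep₀⟩
    have hrep : ∀ x y : H, B x y = ⟪(P + K) x, y⟫ := hrep₀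
    obtain ⟨c₀, hc₀, hcoer⟩ := auxPosCoercive P hPsa hPbij hPpos
    have hK' : IsCompactOperator ⇑(K : H →ₗ[ℝ] H) := hKcpt
    obtain ⟨C, hCcpt, hCsub⟩ := hK'.image_closedBall_subset_compact 1
    obtain ⟨t, htfin, htcov⟩ := (Metric.totallyBounded_iff.mp hCcpt.totallyBounded)
      (c₀ / 2) (by linarith)
    set E := Submodule.span ℝ t with hE
    haveI hEfd : FiniteDimensional ℝ E := FiniteDimensional.span_of_finite ℝ htfin
    haveI : CompleteSpace E := FiniteDimensional.complete ℝ E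
    have hcompl : IsCompl E Eᗮ := Submodule.isCompl_orthogonal_of_hasOrthogonalProjection
    refine ⟨Eᗮ, Submodule.isClosed_orthogonal E, ?_, c₀ / 2, by linarith, ?_⟩
    · exact LinearEquiv.finiteDimensional
        (Submodule.quotientEquivOfIsCompl Eᗮ E hcompl.symm).symm
    · intro x hx hx1
      have hmem : K x ∈ C := hCsub ⟨x, by
        rw [Metric.mem_closedBall, dist_zero_right, hx1], rfl⟩
      obtain ⟨y, hyt, hy⟩ := Set.mem_iUnion₂.mp (htcov hmem)
      have hyE : y ∈ E := Submodule.subset_span hyt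
      have hyx : ⟪y, x⟫ = 0 := (Submodule.mem_orthogonal E x).mp hx y hyE
      have hKxy : ‖K x - y‖ < c₀ / 2 := by
        rwa [Metric.mem_ball, dist_eq_norm] at hy
      have hKbound : |⟪K x - y, x⟫| ≤ ‖K x - y‖ * ‖x‖ := abs_real_inner_le_norm _ _
      have hKineq : -(c₀ / 2) ≤ ⟪K x, x⟫ := by
        have h1 : ⟪K x, x⟫ = ⟪K x - y, x⟫ + ⟪y, x⟫ := by
          rw [inner_sub_left]; ring
        rw [h1, hyx, add_zero]
        rw [hx1, mul_one] at hKbound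
        have := abs_le.mp (hKbound.trans hKxy.le)
        linarith [this.1]
      have hPineq : c₀ ≤ ⟪P x, x⟫ := by
        have := hcoer x
        rw [hx1] at this; linarith
      have hBx : B x x = ⟪P x, x⟫ + ⟪K x, x⟫ := by
        rw [hrep x x]
        simp [inner_add_left]
      rw [hBx]; linarith
  · -- Reverse direction
    rintro ⟨V, hVcl, hVfd, c, hc, hb⟩
    haveI : CompleteSpace V := hVcl.completeSpace_coe
    set T := InnerProductSpace.continuousLinearMapOfBilin B with hTdef
    have hT : ∀ x y, ⟪T x, y⟫ = B x y := fun x y =>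
      InnerProductSpace.continuousLinearMapOfBilin_apply B x y
    have hTsa : ∀ x y, ⟪T x, y⟫ = ⟪x, T y⟫ := by
      intro x y
      rw [hT x y, hsym, ← hT y x, real_inner_comm]
    set Q : H →L[ℝ] H := V.subtypeL.comp (V.orthogonalProjectionOnto) with hQdef
    have hQmem : ∀ x, Q x ∈ V := fun x => (V.orthogonalProjectionOnto x).2
    have hQid : ∀ v ∈ V, Q v = v := fun v hv => Submodule.starProjection_eq_self_iff.mpr hv
    have hQorth : ∀ x, x - Q x ∈ Vᗮ := fun x => Submodule.sub_starProjection_mem_orthogonal x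
    have hQsa : ∀ x y, ⟪Q x, y⟫ = ⟪x, Q y⟫ := fun x y =>
      Submodule.inner_starProjection_left_eq_right V x y
    set P : H →L[ℝ] H := (Q.comp (T.comp Q)) + c • (ContinuousLinearMap.id ℝ H - Q)
      with hPdef
    have hPapp : ∀ x, P x = Q (T (Q x)) + c • (x - Q x) := fun x => rfl
    -- scaling of the lower bound
    have hVbound : ∀ v ∈ V, c * ‖v‖ * ‖v‖ ≤ B v v := by
      intro v hv
      rcases eq_or_ne v 0 with rfl | hv0
      · simp
      · have hnv : 0 < ‖v‖ := norm_pos_iff.mpr hv0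
        set u := ‖v‖⁻¹ • v with hu
        have huV : u ∈ V := V.smul_mem _ hv
        have hun : ‖u‖ = 1 := by
          rw [hu, norm_smul, norm_inv, norm_norm, inv_mul_cancel₀ hnv.ne']
        have hcu := hb u huV hun
        have hBu : B u u = ‖v‖⁻¹ * (‖v‖⁻¹ * B v v) := by
          rw [hu]; simp [inner_smul_left, map_smul]
        rw [hBu] at hcu
        calc c * ‖v‖ * ‖v‖ = (‖v‖ * ‖v‖) * c := by ring
          _ ≤ (‖v‖ * ‖v‖) * (‖v‖⁻¹ * (‖v‖⁻¹ * B v v)) :=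
              mul_le_mul_of_nonneg_left hcu (by positivity)
          _ = B v v := by field_simp
    -- inner product decomposition
    have hinner : ∀ x : H, ⟪P x, x⟫ = B (Q x) (Q x) + c * ‖x - Q x‖ ^ 2 := by
      intro x
      rw [hPapp x, inner_add_left, real_inner_smul_left]
      have h1 : ⟪Q (T (Q x)), x⟫ = B (Q x) (Q x) := by
        rw [hQsa, hT]
      have h2 : ⟪x - Q x, x⟫ = ‖x - Q x‖ ^ 2 := by
        have hv : ⟪x - Q x, Q x⟫ = 0 := by
          have := (Submodule.mem_orthogonal' V (x - Q x)).mp (hQorth x)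
          exact this (Q x) (hQmem x)
        calc ⟪x - Q x, x⟫ = ⟪x - Q x, Q x + (x - Q x)⟫ := by rw [add_sub_cancel]
          _ = ⟪x - Q x, Q x⟫ + ⟪x - Q x, x - Q x⟫ := inner_add_right _ _ _
          _ = ‖x - Q x‖ ^ 2 := by rw [hv, zero_add, real_inner_self_eq_norm_sq]
      rw [h1, h2]
    -- coercivity of P
    have hPcoer : ∀ x, c * ‖x‖ * ‖x‖ ≤ ⟪P x, x⟫ := by
      intro x
      rw [hinner x]
      have hB := hVbound (Q x) (hQmem x)
      have hpyth : ‖x‖ ^ 2 = ‖Q x‖ ^ 2 + ‖x - Q x‖ ^ 2 := by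
        have hv : ⟪Q x, x - Q x⟫ = 0 :=
          ((Submodule.mem_orthogonal V (x - Q x)).mp (hQorth x)) (Q x) (hQmem x)
        have := norm_add_sq_real (Q x) (x - Q x)
        rw [add_sub_cancel, hv] at this
        linarith
      nlinarith [hB, sq_nonneg (‖x - Q x‖)]
    -- P is self-adjoint
    have hPsa : ∀ x y, ⟪P x, y⟫ = ⟪x, P y⟫ := by
      intro x y
      rw [hPapp x, hPapp y, inner_add_left, inner_add_right]
      have h1 : ⟪Q (T (Q x)), y⟫ = ⟪x, Q (T (Q y))⟫ := by
        rw [hQsa, hTsa, hQsa]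
      have h2 : ⟪c • (x - Q x), y⟫ = ⟪x, c • (y - Q y)⟫ := by
        rw [real_inner_smul_left, real_inner_smul_right, inner_sub_left, inner_sub_right, hQsa]
      rw [h1, h2]
    have hPbij : Function.Bijective P := auxCoerciveBijective P hc hPcoer
    have hPpos : ∀ x, x ≠ 0 → 0 < ⟪P x, x⟫ := by
      intro x hx
      have hnx : 0 < ‖x‖ := norm_pos_iff.mpr hx
      calc (0:ℝ) < c * ‖x‖ * ‖x‖ := by positivity
        _ ≤ ⟪P x, x⟫ := hPcoer x
    -- K = T - P is self-adjoint
    have hKsa : ∀ x y, ⟪(T - P) x, y⟫ = ⟪x, (T - P) y⟫ := by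
      intro x y
      simp only [ContinuousLinearMap.sub_apply, inner_sub_left, inner_sub_right]
      rw [hTsa, hPsa]
    -- K is compact
    have hcompl : IsCompl V Vᗮ := Submodule.isCompl_orthogonal_of_hasOrthogonalProjection
    haveI : FiniteDimensional ℝ Vᗮ :=
      LinearEquiv.finiteDimensional (Submodule.quotientEquivOfIsCompl V Vᗮ hcompl)
    set R : H →L[ℝ] H := ContinuousLinearMap.id ℝ H - Q with hRdef
    have hRapp : ∀ x, R x = x - Q x := fun x => rfl
    have hR : ∀ x, R x ∈ Vᗮ := fun x => hQorth x
    have cR : IsCompactOperator ⇑R := auxFinRankCompact R Vᗮ hR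
    have c1 : IsCompactOperator ⇑(R.comp T) :=
      auxFinRankCompact (R.comp T) Vᗮ (fun x => hQorth (T x))
    have c2 : IsCompactOperator ⇑((Q.comp T).comp R) :=
      cR.continuous_comp (Q.comp T).continuous
    have c3 : IsCompactOperator ⇑(c • R) := by
      have := cR.smul c
      exact this
    have hKeq : ⇑(T - P) = (⇑(R.comp T) + ⇑((Q.comp T).comp R)) - ⇑(c • R) := by
      funext x
      simp only [Pi.add_apply, Pi.sub_apply, ContinuousLinearMap.sub_apply,
        ContinuousLinearMap.comp_apply, ContinuousLinearMap.smul_apply, hRapp, hPapp,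
        map_sub, smul_sub]
      abel
    have hKcpt : IsCompactOperator ⇑(T - P) := by
      rw [hKeq]
      exact (c1.add c2).sub c3
    refine ⟨P, T - P, hPsa, hPbij, hPpos, hKsa, hKcpt, fun x y => ?_⟩
    have : P + (T - P) = T := by abel
    rw [this]
    exact (hT x y).symm
end

section
/- The set A = {(B,V) : B a bounded symmetric bilinear form on H, V a closed subspace of H, such that B|_{V×V} is essentially positive} is open in B_s(H) × G(H), where B_s(H) carries the operator-norm topology via representing operators and G(H) is the Grassmannian of closed subspaces with the metric dist(X,Y) = ‖P_X − P_Y‖. -/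
open scoped RealInnerProductSpace

section AuxLemmas

variable {E : Type*} [NormedAddCommGroup E] [InnerProductSpace ℝ E]

private lemma myCauchy (Q : E →L[ℝ] E) (hsym : ∀ x y, ⟪Q x, y⟫ = ⟪x, Q y⟫)
    (hpos : ∀ x, 0 ≤ ⟪Q x, x⟫) (x y : E) :
    ⟪Q x, y⟫ * ⟪Q x, y⟫ ≤ ⟪Q x, x⟫ * ⟪Q y, y⟫ := by
  have key : ∀ t : ℝ, 0 ≤ ⟪Q y, y⟫ * (t * t) + (2 * ⟪Q x, y⟫) * t + ⟪Q x, x⟫ := by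
    intro t
    have h0 := hpos (x + t • y)
    have e2 : ⟪Q y, x⟫ = ⟪Q x, y⟫ := by rw [hsym]; exact real_inner_comm _ _
    have e1 : ⟪Q (x + t • y), x + t • y⟫
        = ⟪Q x, x⟫ + t * ⟪Q x, y⟫ + t * ⟪Q y, x⟫ + t * t * ⟪Q y, y⟫ := by
      simp [map_add, map_smul, inner_add_left, inner_add_right,
        real_inner_smul_left, real_inner_smul_right]
      ring
    rw [e1, e2] at h0
    nlinarith [h0]
  have hd := discrim_le_zero key
  simp only [discrim] at hd
  nlinarith [hd]

private noncomputable def bilinOf (Q : E →L[ℝ] E) : E →L[ℝ] E →L[ℝ] ℝ :=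
  LinearMap.mkContinuous₂
    (LinearMap.mk₂ ℝ (fun x y => ⟪Q x, y⟫)
      (fun x x' y => by simp [inner_add_left])
      (fun c x y => by simp [real_inner_smul_left])
      (fun x y y' => by simp [inner_add_right])
      (fun c x y => by simp [real_inner_smul_right]))
    ‖Q‖ (fun x y => by
      simp only [LinearMap.mk₂_apply, Real.norm_eq_abs]
      calc |⟪Q x, y⟫| ≤ ‖Q x‖ * ‖y‖ := abs_real_inner_le_norm _ _
        _ ≤ ‖Q‖ * ‖x‖ * ‖y‖ :=
          mul_le_mul_of_nonneg_right (Q.le_opNorm x) (norm_nonneg y))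

@[simp] private lemma bilinOf_apply (Q : E →L[ℝ] E) (x y : E) :
    bilinOf Q x y = ⟪Q x, y⟫ := rfl

private lemma bijective_of_coercive [CompleteSpace E] (Q : E →L[ℝ] E) (c : ℝ) (hc : 0 < c)
    (h : ∀ x, c * ‖x‖ ^ 2 ≤ ⟪Q x, x⟫) : Function.Bijective Q := by
  have hco : IsCoercive (bilinOf Q) := ⟨c, hc, fun u => by
    have := h u; rw [pow_two] at this; simpa [mul_assoc] using this⟩
  have he : ∀ v, Q v = hco.continuousLinearEquivOfBilin v := by
    intro v
    refine ext_inner_right ℝ fun w => ?_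
    rw [hco.continuousLinearEquivOfBilin_apply v w, bilinOf_apply]
  have : ⇑Q = ⇑hco.continuousLinearEquivOfBilin := funext he
  rw [show (⇑Q : E → E) = ⇑hco.continuousLinearEquivOfBilin from this]
  exact hco.continuousLinearEquivOfBilin.bijective

private lemma coercive_of_pos_bij [CompleteSpace E] (Q : E →L[ℝ] E)
    (hsym : ∀ x y, ⟪Q x, y⟫ = ⟪x, Q y⟫) (hbij : Function.Bijective Q)
    (hpos : ∀ x, x ≠ 0 → 0 < ⟪Q x, x⟫) :
    ∃ c > 0, ∀ x, c * ‖x‖ ^ 2 ≤ ⟪Q x, x⟫ := by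
  have hpos' : ∀ x, 0 ≤ ⟪Q x, x⟫ := by
    intro x
    rcases eq_or_ne x 0 with rfl | hx
    · simp
    · exact (hpos x hx).le
  set e := ContinuousLinearEquiv.ofBijective Q
    (LinearMap.ker_eq_bot.mpr hbij.1) (LinearMap.range_eq_top.mpr hbij.2) with he
  obtain ⟨Kl, hKl⟩ : ∃ K : NNReal, AntilipschitzWith K ⇑Q := by
    have h := e.antilipschitz
    rw [he, ContinuousLinearEquiv.coeFn_ofBijective] at h
    exact ⟨_, h⟩
  have hlbd : ∀ x : E, ‖x‖ ≤ (Kl : ℝ) * ‖Q x‖ := by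
    intro x
    have := hKl.le_mul_dist x 0
    simpa [dist_eq_norm] using this
  have hd : (0:ℝ) < ((Kl : ℝ) + 1) ^ 2 * (‖Q‖ + 1) := by positivity
  refine ⟨(((Kl : ℝ) + 1) ^ 2 * (‖Q‖ + 1))⁻¹, by positivity, fun x => ?_⟩
  rcases eq_or_ne x 0 with rfl | hx
  · simp
  have hxn : 0 < ‖x‖ := norm_pos_iff.mpr hx
  have hQx : 0 < ‖Q x‖ := by
    by_contra hcon
    push_neg at hcon
    have : ‖Q x‖ = 0 := le_antisymm hcon (norm_nonneg _)
    have h5 := hlbd x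
    rw [this] at h5
    nlinarith
  have key := myCauchy Q hsym hpos' x (Q x)
  have h1 : ⟪Q x, Q x⟫ = ‖Q x‖ ^ 2 := real_inner_self_eq_norm_sq _
  have h2 : ⟪Q (Q x), Q x⟫ ≤ ‖Q‖ * ‖Q x‖ * ‖Q x‖ := by
    calc ⟪Q (Q x), Q x⟫ ≤ ‖Q (Q x)‖ * ‖Q x‖ := real_inner_le_norm _ _
      _ ≤ ‖Q‖ * ‖Q x‖ * ‖Q x‖ :=
        mul_le_mul_of_nonneg_right (Q.le_opNorm _) (norm_nonneg _)
  have key2 : ‖Q x‖ ^ 2 * ‖Q x‖ ^ 2 ≤ ⟪Q x, x⟫ * (‖Q‖ * ‖Q x‖ * ‖Q x‖) := by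
    rw [h1] at key
    exact le_trans key (mul_le_mul_of_nonneg_left h2 (hpos' x))
  have h3 : ‖Q x‖ ^ 2 ≤ ⟪Q x, x⟫ * (‖Q‖ + 1) := by
    nlinarith [key2, pow_pos hQx 2, hpos' x, Q.opNorm_nonneg]
  have h4 : ‖x‖ ≤ ((Kl : ℝ) + 1) * ‖Q x‖ := by
    have := hlbd x
    nlinarith [norm_nonneg (Q x)]
  rw [inv_mul_le_iff₀ hd]
  have h4sq : ‖x‖ ^ 2 ≤ (((Kl : ℝ) + 1) * ‖Q x‖) ^ 2 := by
    have := pow_le_pow_left₀ (norm_nonneg x) h4 2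
    simpa using this
  nlinarith [mul_le_mul_of_nonneg_left h3 (sq_nonneg ((Kl : ℝ) + 1)), h4sq]

end AuxLemmas

section Ess

variable {E : Type*} [NormedAddCommGroup E] [InnerProductSpace ℝ E] [CompleteSpace E]

private lemma isEssPos_of_bound (B : E → E → ℝ) (A : E →L[ℝ] E)
    (hBA : ∀ x y, B x y = ⟪A x, y⟫) (hA : ∀ x y, ⟪A x, y⟫ = ⟪x, A y⟫)
    (K : E →L[ℝ] E) (hK : ∀ x y, ⟪K x, y⟫ = ⟪x, K y⟫) (hKc : IsCompactOperator K)
    (c : ℝ) (hc : 0 < c) (h : ∀ x, c * ‖x‖ ^ 2 ≤ ⟪A x, x⟫ + ⟪K x, x⟫) :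
    IsEssPos B := by
  set Q : E →L[ℝ] E := A + K with hQ
  have hQapp : ∀ x, Q x = A x + K x := fun x => rfl
  have hQsym : ∀ x y, ⟪Q x, y⟫ = ⟪x, Q y⟫ := by
    intro x y
    rw [hQapp, hQapp, inner_add_left, inner_add_right, hA, hK]
  have hQc : ∀ x, c * ‖x‖ ^ 2 ≤ ⟪Q x, x⟫ := by
    intro x
    rw [hQapp, inner_add_left]
    exact h x
  refine ⟨Q, -K, hQsym, bijective_of_coercive Q c hc hQc, ?_, ?_, ?_, ?_⟩
  · intro x hx
    have hxn : 0 < ‖x‖ := norm_pos_iff.mpr hx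
    have := hQc x
    nlinarith [pow_pos hxn 2]
  · intro x y
    simp only [ContinuousLinearMap.neg_apply, inner_neg_left, inner_neg_right, hK]
  · have hcn : ⇑(-K) = -⇑K := rfl
    rw [hcn]; exact hKc.neg
  · intro x y
    rw [hBA]
    have : Q + -K = A := by ext z; simp [hQ]
    rw [this]

private lemma bound_of_isEssPos (B : E → E → ℝ) (A : E →L[ℝ] E)
    (hBA : ∀ x y, B x y = ⟪A x, y⟫) (h : IsEssPos B) :
    ∃ c > 0, ∃ K : E →L[ℝ] E, (∀ x y, ⟪K x, y⟫ = ⟪x, K y⟫) ∧ IsCompactOperator ⇑K ∧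
      ∀ x, c * ‖x‖ ^ 2 ≤ ⟪A x, x⟫ + ⟪K x, x⟫ := by
  obtain ⟨P₀, K₀, hP₀sym, hP₀bij, hP₀pos, hK₀sym, hK₀c, hB⟩ := h
  obtain ⟨c, hc, hcoer⟩ := coercive_of_pos_bij P₀ hP₀sym hP₀bij hP₀pos
  refine ⟨c, hc, -K₀, ?_, ?_, fun x => ?_⟩
  · intro x y
    simp only [ContinuousLinearMap.neg_apply, inner_neg_left, inner_neg_right, hK₀sym]
  · have hcn : ⇑(-K₀) = -⇑K₀ := rfl
    rw [hcn]; exact hK₀c.neg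
  · have hAx : ⟪A x, x⟫ = ⟪P₀ x, x⟫ + ⟪K₀ x, x⟫ := by
      rw [← hBA, hB]
      simp [inner_add_left]
    have h2 := hcoer x
    simp only [ContinuousLinearMap.neg_apply, inner_neg_left]
    linarith

end Ess

section ProjHelpers

variable {H : Type*} [NormedAddCommGroup H] [InnerProductSpace ℝ H] [CompleteSpace H]

private lemma proj_fix (P : H →L[ℝ] H) (hPproj : P ∘L P = P) {v : H}
    (hv : v ∈ LinearMap.range (P : H →ₗ[ℝ] H)) : P v = v := by
  obtain ⟨u, rfl⟩ := hv
  calc P (P u) = (P ∘L P) u := rfl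
    _ = P u := by rw [hPproj]

private lemma range_isClosed (P : H →L[ℝ] H) (hPproj : P ∘L P = P) :
    IsClosed ((LinearMap.range (P : H →ₗ[ℝ] H) : Submodule ℝ H) : Set H) := by
  have : ((LinearMap.range (P : H →ₗ[ℝ] H) : Submodule ℝ H) : Set H) = {x | P x = x} := by
    ext x
    constructor
    · intro hx
      exact proj_fix P hPproj hx
    · intro hx
      exact ⟨x, hx⟩
  rw [this]
  exact isClosed_eq P.continuous continuous_id

end ProjHelpers

set_option maxHeartbeats 1000000 in
/-- the set of pairs `(B, V)` — a bounded symmetric bilinear form (given by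
its representing self-adjoint operator `T`) and a closed subspace (given by its orthogonal
projection `P`) — such that `B|_{V×V}` is essentially positive, is open: here openness is
expressed by the existence of `ε > 0` such that any nearby pair (in the operator norm for
`T` and in the gap metric, i.e. the operator norm of the difference of the orthogonal
projections, for `V`) still has essentially positive restriction. -/
theorem stmt13 {H : Type*} [NormedAddCommGroup H] [InnerProductSpace ℝ H] [CompleteSpace H]
    (T : H →L[ℝ] H) (hT : ∀ x y : H, ⟪T x, y⟫ = ⟪x, T y⟫)
    (P : H →L[ℝ] H) (hPproj : P ∘L P = P) (hPsa : ∀ x y : H, ⟪P x, y⟫ = ⟪x, P y⟫)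
    (hess : IsEssPos (fun x y : LinearMap.range (P : H →ₗ[ℝ] H) => ⟪T (x : H), (y : H)⟫)) :
    ∃ ε > 0, ∀ T' P' : H →L[ℝ] H, (∀ x y : H, ⟪T' x, y⟫ = ⟪x, T' y⟫) →
      P' ∘L P' = P' → (∀ x y : H, ⟪P' x, y⟫ = ⟪x, P' y⟫) →
      ‖T' - T‖ < ε → ‖P' - P‖ < ε →
      IsEssPos (fun x y : LinearMap.range (P' : H →ₗ[ℝ] H) => ⟪T' (x : H), (y : H)⟫) := by
  haveI hVc : CompleteSpace (LinearMap.range (P : H →ₗ[ℝ] H)) := (range_isClosed P hPproj).completeSpace_coe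
  set V : Submodule ℝ H := LinearMap.range (P : H →ₗ[ℝ] H) with hV
  let A : V →L[ℝ] V := (P ∘L T ∘L V.subtypeL).codRestrict V (fun x => ⟨_, rfl⟩)
  have hBA : ∀ x y : V, ⟪T (x : H), (y : H)⟫ = ⟪A x, y⟫ := by
    intro x y
    have h1 : (⟪A x, y⟫ : ℝ) = ⟪P (T (x : H)), (y : H)⟫ := rfl
    rw [h1, hPsa, proj_fix P hPproj y.2]
  obtain ⟨c, hc, K, hKsym, hKc, hbound⟩ :=
    bound_of_isEssPos (fun x y : V => ⟪T (x : H), (y : H)⟫) A hBA hess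
  set ε : ℝ := min (1/2) (c / (8 * (1 + 3 * ‖T‖))) with hεdef
  have hTn : (0:ℝ) < 1 + 3 * ‖T‖ := by positivity
  have hεpos : 0 < ε := lt_min (by norm_num) (by positivity)
  have hε2 : ε ≤ 1/2 := min_le_left _ _
  have hε3 : ε * (1 + 3 * ‖T‖) ≤ c / 8 := by
    have h := min_le_right (1/2) (c / (8 * (1 + 3 * ‖T‖)))
    calc ε * (1 + 3 * ‖T‖) ≤ (c / (8 * (1 + 3 * ‖T‖))) * (1 + 3 * ‖T‖) :=
          mul_le_mul_of_nonneg_right h hTn.le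
      _ = c / 8 := by field_simp
  refine ⟨ε, hεpos, ?_⟩
  intro T' P' hT' hP'proj hP'sa hTT' hPP'
  haveI hV'c : CompleteSpace (LinearMap.range (P' : H →ₗ[ℝ] H)) := (range_isClosed P' hP'proj).completeSpace_coe
  set V' : Submodule ℝ H := LinearMap.range (P' : H →ₗ[ℝ] H) with hV'
  let A' : V' →L[ℝ] V' := (P' ∘L T' ∘L V'.subtypeL).codRestrict V' (fun x => ⟨_, rfl⟩)
  have hBA' : ∀ x y : V', ⟪T' (x : H), (y : H)⟫ = ⟪A' x, y⟫ := by
    intro x y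
    have h1 : (⟪A' x, y⟫ : ℝ) = ⟪P' (T' (x : H)), (y : H)⟫ := rfl
    rw [h1, hP'sa, proj_fix P' hP'proj y.2]
  have hA'sym : ∀ x y : V', ⟪A' x, y⟫ = ⟪x, A' y⟫ := by
    intro x y
    calc ⟪A' x, y⟫ = ⟪T' (x : H), (y : H)⟫ := (hBA' x y).symm
      _ = ⟪(x : H), T' (y : H)⟫ := hT' _ _
      _ = ⟪T' (y : H), (x : H)⟫ := real_inner_comm _ _
      _ = ⟪A' y, x⟫ := hBA' y x
      _ = ⟪x, A' y⟫ := real_inner_comm _ _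
  let J : V' →L[ℝ] V := (P ∘L V'.subtypeL).codRestrict V (fun x => ⟨_, rfl⟩)
  have hJ : ∀ x : V', (J x : H) = P (x : H) := fun x => rfl
  let K' : V' →L[ℝ] V' := (ContinuousLinearMap.adjoint J) ∘L (K ∘L J)
  have hK'inner : ∀ x y : V', ⟪K' x, y⟫ = ⟪K (J x), J y⟫ := by
    intro x y
    exact ContinuousLinearMap.adjoint_inner_left J y (K (J x))
  have hK'sym : ∀ x y : V', ⟪K' x, y⟫ = ⟪x, K' y⟫ := by
    intro x y
    calc ⟪K' x, y⟫ = ⟪K (J x), J y⟫ := hK'inner x y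
      _ = ⟪J x, K (J y)⟫ := hKsym _ _
      _ = ⟪K (J y), J x⟫ := real_inner_comm _ _
      _ = ⟪K' y, x⟫ := (hK'inner y x).symm
      _ = ⟪x, K' y⟫ := real_inner_comm _ _
  have hK'c : IsCompactOperator ⇑K' := by
    have h1 : IsCompactOperator (⇑K ∘ ⇑J) := hKc.comp_clm J
    exact h1.clm_comp (ContinuousLinearMap.adjoint J)
  have hkey : ∀ x : V', c/8 * ‖x‖ ^ 2 ≤ ⟪A' x, x⟫ + ⟪K' x, x⟫ := by
    intro x
    set u : H := (x : H) with hu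
    have hfix' : P' u = u := proj_fix P' hP'proj x.2
    set δ : ℝ := ‖P' - P‖ with hδdef
    have hδ0 : (0:ℝ) ≤ δ := norm_nonneg _
    have hδε : δ < ε := hPP'
    have hd : ‖u - P u‖ ≤ δ * ‖u‖ := by
      have heq : u - P u = (P' - P) u := by
        rw [ContinuousLinearMap.sub_apply, hfix']
      rw [heq]
      exact (P' - P).le_opNorm u
    have hnux : ‖x‖ = ‖u‖ := rfl
    have hnJ : ‖J x‖ = ‖P u‖ := rfl
    have hA'x : ⟪A' x, x⟫ = ⟪T' u, u⟫ := (hBA' x x).symm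
    have hKJ : ⟪K' x, x⟫ = ⟪K (J x), J x⟫ := hK'inner x x
    have hb := hbound (J x)
    have hAJx : ⟪A (J x), J x⟫ = ⟪T (P u), P u⟫ := (hBA (J x) (J x)).symm
    rw [hAJx, hnJ] at hb
    -- hb : c * ‖P u‖ ^ 2 ≤ ⟪T (P u), P u⟫ + ⟪K (J x), J x⟫
    have hPu_lb : (1 - δ) * ‖u‖ ≤ ‖P u‖ := by
      have h5 : ‖u‖ ≤ ‖P u‖ + ‖u - P u‖ := by
        calc ‖u‖ = ‖P u + (u - P u)‖ := by congr 1; abel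
          _ ≤ ‖P u‖ + ‖u - P u‖ := norm_add_le _ _
      nlinarith [hd]
    have hPu_ub : ‖P u‖ ≤ (1 + δ) * ‖u‖ := by
      calc ‖P u‖ = ‖u - (u - P u)‖ := by congr 1; abel
        _ ≤ ‖u‖ + ‖u - P u‖ := norm_sub_le _ _
        _ ≤ (1 + δ) * ‖u‖ := by nlinarith [hd]
    have hT'T : |⟪T' u, u⟫ - ⟪T u, u⟫| ≤ ε * ‖u‖ ^ 2 := by
      have h6 : ⟪T' u, u⟫ - ⟪T u, u⟫ = ⟪(T' - T) u, u⟫ := by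
        rw [ContinuousLinearMap.sub_apply, inner_sub_left]
      rw [h6]
      calc |⟪(T' - T) u, u⟫| ≤ ‖(T' - T) u‖ * ‖u‖ := abs_real_inner_le_norm _ _
        _ ≤ ‖T' - T‖ * ‖u‖ * ‖u‖ :=
          mul_le_mul_of_nonneg_right ((T' - T).le_opNorm u) (norm_nonneg _)
        _ ≤ ε * ‖u‖ ^ 2 := by nlinarith [norm_nonneg u, sq_nonneg ‖u‖, hTT']
    have hdecomp : ⟪T u, u⟫ - ⟪T (P u), P u⟫
        = ⟪T (u - P u), u⟫ + ⟪T (P u), u - P u⟫ := by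
      rw [map_sub, inner_sub_left, inner_sub_right]
      ring
    have hb1 : |⟪T (u - P u), u⟫| ≤ ‖T‖ * (δ * ‖u‖) * ‖u‖ := by
      calc |⟪T (u - P u), u⟫| ≤ ‖T (u - P u)‖ * ‖u‖ := abs_real_inner_le_norm _ _
        _ ≤ ‖T‖ * ‖u - P u‖ * ‖u‖ :=
          mul_le_mul_of_nonneg_right (T.le_opNorm _) (norm_nonneg _)
        _ ≤ ‖T‖ * (δ * ‖u‖) * ‖u‖ := by
          have := mul_le_mul_of_nonneg_left hd (norm_nonneg T)
          nlinarith [norm_nonneg u]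
    have hb2 : |⟪T (P u), u - P u⟫| ≤ (‖T‖ * ((1 + δ) * ‖u‖)) * (δ * ‖u‖) := by
      calc |⟪T (P u), u - P u⟫| ≤ ‖T (P u)‖ * ‖u - P u‖ := abs_real_inner_le_norm _ _
        _ ≤ (‖T‖ * ‖P u‖) * ‖u - P u‖ :=
          mul_le_mul_of_nonneg_right (T.le_opNorm _) (norm_nonneg _)
        _ ≤ (‖T‖ * ((1 + δ) * ‖u‖)) * (δ * ‖u‖) := by
          apply mul_le_mul
          · exact mul_le_mul_of_nonneg_left hPu_ub (norm_nonneg T)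
          · exact hd
          · exact norm_nonneg _
          · positivity
    have hnum : c / 4 ≤ c * (1 - δ) ^ 2 := by
      have h7 : (0:ℝ) ≤ 1/2 - δ := by linarith
      have h8 : (0:ℝ) ≤ 3/2 - δ := by linarith
      nlinarith [mul_nonneg hc.le (mul_nonneg h7 h8)]
    have hsq : ((1 - δ) * ‖u‖) ^ 2 ≤ ‖P u‖ ^ 2 := by
      have h9 : (0:ℝ) ≤ (1 - δ) * ‖u‖ := by
        have : (0:ℝ) ≤ 1 - δ := by linarith
        positivity
      exact pow_le_pow_left₀ h9 hPu_lb 2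
    have hcPu : c / 4 * ‖u‖ ^ 2 ≤ c * ‖P u‖ ^ 2 := by
      nlinarith [hsq, hnum, sq_nonneg ‖u‖, hc.le]
    have hscal : ε + ‖T‖ * δ + ‖T‖ * (1 + δ) * δ ≤ c / 8 := by
      have hTd : ‖T‖ * δ ≤ ‖T‖ * ε := mul_le_mul_of_nonneg_left hδε.le (norm_nonneg T)
      have hδδ : δ * δ ≤ (1/2) * ε := by
        nlinarith [mul_nonneg hδ0 (show (0:ℝ) ≤ 1/2 - δ by linarith)]
      have hTδδ : ‖T‖ * (δ * δ) ≤ ‖T‖ * ((1/2) * ε) :=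
        mul_le_mul_of_nonneg_left hδδ (norm_nonneg T)
      have hTe : (0:ℝ) ≤ ‖T‖ * ε := mul_nonneg (norm_nonneg T) hεpos.le
      nlinarith [hε3]
    have herr : ε * ‖u‖ ^ 2 + ‖T‖ * (δ * ‖u‖) * ‖u‖ + (‖T‖ * ((1 + δ) * ‖u‖)) * (δ * ‖u‖)
        ≤ c / 8 * ‖u‖ ^ 2 := by
      nlinarith [hscal, sq_nonneg ‖u‖]
    have habs1 := abs_le.mp hT'T
    have habs2 := abs_le.mp hb1
    have habs3 := abs_le.mp hb2
    rw [hnux, hA'x, hKJ]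
    linarith [hb, hcPu, herr, habs1.1, habs2.1, habs3.1, hdecomp]
  exact isEssPos_of_bound (fun x y : V' => ⟪T' (x : H), (y : H)⟫) A' hBA' hA'sym
    K' hK'sym hK'c (c/8) (by linarith) hkey
end

section
/- Let (M,g) be a Lorentzian manifold, γ a geodesic in M, and Y a timelike Jacobi field along γ that is not admissible, i.e., Y'(0) = α Y(0) for some α ∈ ℝ. If γ is spacelike or lightlike, then there exist a, b ∈ ℝ (which may be taken arbitrarily small) such that the Jacobi field Ȳ(t) = Y(t) + (a + bt)γ̇(t) is timelike and admissible, i.e., Ȳ(0) and Ȳ'(0) are linearly independent. -/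
open Set

set_option maxHeartbeats 1000000 in
/-- STATEMENT 18 (perturbation to an admissible Jacobi field), formulated in the
Morse–Sturm reduction of the geometric setup: using a parallel orthonormal frame along
the geodesic `γ`, the metric becomes a fixed nondegenerate symmetric bilinear form `g`
of index `1` on `ℝⁿ`, the velocity `γ̇` becomes a fixed nonzero vector `v` (parallel,
with `R(t) v = 0` since `γ̇` is a Jacobi field), and Jacobi fields become solutions of
`Y'' = R(t) Y` with `R(t)` `g`-symmetric. If the timelike Jacobi field `Y` is not
admissible (`Y'(0) = α Y(0)`) and `γ` is spacelike or lightlike (`g(v,v) ≥ 0`), then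
there exist arbitrarily small `a, b ∈ ℝ` such that `Ȳ(t) = Y(t) + (a + b t) v` is
timelike on `[0,1]` and admissible, i.e. `Ȳ(0) = Y(0) + a v` and
`Ȳ'(0) = Y'(0) + b v` are linearly independent. -/
theorem stmt18 {n : ℕ} (g : (Fin n → ℝ) →ₗ[ℝ] (Fin n → ℝ) →ₗ[ℝ] ℝ)
    (hsym : ∀ x y, g x y = g y x)
    (hnondeg : ∀ x, (∀ y, g x y = 0) → x = 0)
    (v : Fin n → ℝ) (hv : v ≠ 0) (hcausal : 0 ≤ g v v)
    (R : ℝ → (Fin n → ℝ) →ₗ[ℝ] (Fin n → ℝ))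
    (hRsym : ∀ t x y, g (R t x) y = g x (R t y))
    (hRv : ∀ t, R t v = 0)
    (Y : ℝ → Fin n → ℝ) (hY1 : Differentiable ℝ Y) (hY2 : Differentiable ℝ (deriv Y))
    (hJacobi : ∀ t, deriv (deriv Y) t = R t (Y t))
    (htimelike : ∀ t ∈ Icc (0:ℝ) 1, g (Y t) (Y t) < 0)
    (α : ℝ) (hnotadm : deriv Y 0 = α • Y 0) :
    ∀ ε > 0, ∃ a' b' : ℝ, |a'| < ε ∧ |b'| < ε ∧
      (∀ t ∈ Icc (0:ℝ) 1,
        g (Y t + (a' + b' * t) • v) (Y t + (a' + b' * t) • v) < 0) ∧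
      LinearIndependent ℝ ![Y 0 + a' • v, deriv Y 0 + b' • v] := by
  intro ε hε
  have hYc : Continuous Y := hY1.continuous
  -- continuity of bilinear evaluations
  let G : (Fin n → ℝ) →ₗ[ℝ] (Fin n → ℝ) →L[ℝ] ℝ :=
    { toFun := fun x => LinearMap.toContinuousLinearMap (g x),
      map_add' := by intro x y; ext z; simp,
      map_smul' := by intro c x; ext z; simp }
  have hG : Continuous G := G.continuous_of_finiteDimensional
  have hcont1 : Continuous fun t => g (Y t) (Y t) := (hG.comp hYc).clm_apply hYc
  have hcont2 : Continuous fun t => |g (Y t) v| :=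
    ((hG.comp hYc).clm_apply continuous_const).abs
  -- max of g(Y t, Y t)
  obtain ⟨t₀, ht₀, hm⟩ := isCompact_Icc.exists_isMaxOn (nonempty_Icc.2 zero_le_one)
    hcont1.continuousOn
  set m := g (Y t₀) (Y t₀) with hmdef
  have hm0 : m < 0 := htimelike t₀ ht₀
  -- max of |g(Y t, v)|
  obtain ⟨t₁, ht₁, hC⟩ := isCompact_Icc.exists_isMaxOn (nonempty_Icc.2 zero_le_one)
    hcont2.continuousOn
  set C := |g (Y t₁) v| with hCdef
  have hC0 : 0 ≤ C := abs_nonneg _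
  set K := 2 * C + g v v + 1 with hKdef
  have hK : 0 < K := by positivity
  set b := min (ε / 2) (min 1 (-m / (2 * K))) with hbdef
  have hb0 : 0 < b := by
    apply lt_min (by linarith)
    exact lt_min one_pos (div_pos (by linarith) (by linarith))
  have hb1 : b ≤ 1 := le_trans (min_le_right _ _) (min_le_left _ _)
  have hbK : b * K ≤ -m / 2 := by
    have h1 : b ≤ -m / (2 * K) := le_trans (min_le_right _ _) (min_le_right _ _)
    calc b * K ≤ (-m / (2 * K)) * K := mul_le_mul_of_nonneg_right h1 hK.le
    _ = -m / 2 := by field_simp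
  -- Y 0 ≠ 0 and linear independence of Y 0, v
  have hY00 : g (Y 0) (Y 0) < 0 := htimelike 0 (by constructor <;> norm_num)
  have hY0ne : Y 0 ≠ 0 := by
    intro h
    rw [h] at hY00
    simp at hY00
  have hpair : LinearIndependent ℝ ![Y 0, v] := by
    rw [LinearIndependent.pair_iff]
    intro s t hst
    rcases eq_or_ne t 0 with ht | ht
    · subst ht
      simp only [zero_smul, add_zero, smul_eq_zero] at hst
      exact ⟨hst.resolve_right hY0ne, rfl⟩
    · exfalso
      have hveq : v = (-s / t) • Y 0 := by
        have h2 : s • Y 0 = -(t • v) := by rwa [add_eq_zero_iff_eq_neg] at hst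
        have h1 : t • v = (-s) • Y 0 := by
          rw [neg_smul]
          rw [h2, neg_neg]
        calc v = t⁻¹ • (t • v) := by rw [smul_smul, inv_mul_cancel₀ ht, one_smul]
        _ = t⁻¹ • ((-s) • Y 0) := by rw [h1]
        _ = (-s / t) • Y 0 := by rw [smul_smul, div_eq_mul_inv, mul_comm]
      have hgvv : g v v = (-s / t) ^ 2 * g (Y 0) (Y 0) := by
        rw [hveq]; simp [smul_eq_mul]; ring
      rcases eq_or_ne s 0 with hs | hs
      · exact hv (by rw [hveq, hs]; simp)
      · have hne : -s / t ≠ 0 := div_ne_zero (neg_ne_zero.2 hs) ht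
        have : (-s / t) ^ 2 > 0 := by positivity
        nlinarith
  rw [hKdef] at hbK
  have hmax : ∀ t ∈ Icc (0:ℝ) 1, g (Y t) (Y t) ≤ m := fun t ht => hm ht
  have hCmax : ∀ t ∈ Icc (0:ℝ) 1, |g (Y t) v| ≤ C := fun t ht => hC ht
  clear hm hC
  clear_value m C K b
  clear hG hcont1 hcont2 hnondeg hRsym hRv hJacobi hY2
  clear G
  refine ⟨0, b, by simpa using hε, ?_, ?_, ?_⟩
  · rw [abs_of_pos hb0]
    rw [hbdef]
    exact lt_of_le_of_lt (min_le_left _ _) (by linarith)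
  · -- timelike
    intro t ht
    have hexp : g (Y t + (0 + b * t) • v) (Y t + (0 + b * t) • v)
        = g (Y t) (Y t) + 2 * (b * t) * g (Y t) v + (b * t) ^ 2 * g v v := by
      simp only [map_add, map_smul, LinearMap.add_apply, LinearMap.smul_apply,
        smul_eq_mul, zero_add]
      rw [hsym v (Y t)]; ring
    rw [hexp]
    have h1 : g (Y t) (Y t) ≤ m := hmax t ht
    have h2 : |g (Y t) v| ≤ C := hCmax t ht
    have ht0 : 0 ≤ t := ht.1
    have ht1 : t ≤ 1 := ht.2
    have h3 : 2 * (b * t) * g (Y t) v ≤ 2 * b * C := by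
      have habs : g (Y t) v ≤ C := le_trans (le_abs_self _) h2
      have h5 : 2 * (b * t) * g (Y t) v ≤ 2 * (b * t) * C :=
        mul_le_mul_of_nonneg_left habs (by positivity)
      nlinarith [mul_nonneg (mul_nonneg hb0.le hC0) (sub_nonneg.2 ht1)]
    have hbt2 : (b * t) ^ 2 ≤ b := by
      have h6 : t ^ 2 ≤ 1 := by nlinarith
      have h7 : b ^ 2 * t ^ 2 ≤ b ^ 2 * 1 := mul_le_mul_of_nonneg_left h6 (sq_nonneg b)
      have h8 : b ^ 2 ≤ b := by nlinarith
      nlinarith [h7, h8]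
    have h4 : (b * t) ^ 2 * g v v ≤ b * g v v :=
      mul_le_mul_of_nonneg_right hbt2 hcausal
    nlinarith [h1, h3, h4, hbK, hb0]
  · -- linear independence
    rw [LinearIndependent.pair_iff]
    intro s t hst
    have hst' : (s + t * α) • Y 0 + (t * b) • v = 0 := by
      simp only [zero_smul, add_zero, hnotadm] at hst
      rw [← hst]
      simp only [smul_add, smul_smul, add_smul]
      abel
    have := LinearIndependent.pair_iff.1 hpair (s + t * α) (t * b) hst'
    have ht : t = 0 := by
      rcases mul_eq_zero.1 this.2 with h | h
      · exact h
      · exact absurd h (ne_of_gt hb0)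
    constructor
    · have := this.1; rw [ht] at this; linarith
    · exact ht
end
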